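/- Let n ≥ 2, let μ_1,…,μ_n > 0 and λ ≥ 0 satisfy λ < Σ_{i=1}^n μ_i. Set ε_0 = Σ_{i=1}^n μ_i − λ, μ_min = min_i μ_i, and ε = min(ε_0, μ_min)/4. Then there exists γ ∈ (0,1] such that max_{1 ≤ j ≤ n} { (max(λ − μ_j, 0))^{1+γ} − Σ_{i ≠ j} μ_i } < −2ε. -/

import Mathlib

/-- **Choice of the exponent `γ`** (existence of `γ` in the drift lemma).  Let `n ≥ 2`,
`μ 1, …, μ n > 0` and `λ ≥ 0` with `λ < ∑ i, μ i`.  Set `ε₀ = ∑ i, μ i − λ`,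
`μ_min = min_i μ i` and `ε = min (ε₀, μ_min) / 4`.  Then there exists `γ ∈ (0, 1]` such that
`max_j { ((λ − μ j)⁺) ^ (1+γ) − ∑_{i ≠ j} μ i } < −2 ε`. -/
theorem exists_gamma
    {n : ℕ} (hn : 2 ≤ n) (μ : Fin n → ℝ) (hμ : ∀ i, 0 < μ i)
    (lam : ℝ) (hlam : 0 ≤ lam) (hload : lam < ∑ i, μ i) :
    ∃ γ : ℝ, 0 < γ ∧ γ ≤ 1 ∧
      ∀ j : Fin n,
        (max (lam - μ j) 0) ^ ((1 : ℝ) + γ) - ∑ i ∈ Finset.univ.erase j, μ i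
          < -2 * (min (∑ i, μ i - lam)
              (Finset.univ.inf'
                (Finset.univ_nonempty_iff.mpr ⟨⟨0, Nat.lt_of_lt_of_le Nat.zero_lt_two hn⟩⟩)
                μ) / 4) := by
  set m : ℝ := Finset.univ.inf'
      (Finset.univ_nonempty_iff.mpr ⟨⟨0, Nat.lt_of_lt_of_le Nat.zero_lt_two hn⟩⟩) μ with hm
  set ε : ℝ := min (∑ i, μ i - lam) m / 4 with hε
  have hm_pos : 0 < m := by
    rw [hm, Finset.lt_inf'_iff]
    exact fun i _ => hμ i
  have hε0_pos : 0 < ∑ i, μ i - lam := by linarith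
  have hε_pos : 0 < ε := by
    rw [hε]
    have : 0 < min (∑ i, μ i - lam) m := lt_min hε0_pos hm_pos
    linarith
  -- the limit value at γ = 0 satisfies the strict inequality
  have key : ∀ j : Fin n,
      (max (lam - μ j) 0) - ∑ i ∈ Finset.univ.erase j, μ i < -2 * ε := by
    intro j
    have hSj : m ≤ ∑ i ∈ Finset.univ.erase j, μ i := by
      obtain ⟨k, hk⟩ := Finset.exists_mem_ne
        (by rw [Finset.card_univ, Fintype.card_fin]; omega) j
      have hk' : k ∈ Finset.univ.erase j := Finset.mem_erase.mpr ⟨hk.2, Finset.mem_univ k⟩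
      calc m ≤ μ k := Finset.inf'_le _ (Finset.mem_univ k)
        _ ≤ ∑ i ∈ Finset.univ.erase j, μ i :=
          Finset.single_le_sum (fun i _ => (hμ i).le) hk'
    have hsum : ∑ i ∈ Finset.univ.erase j, μ i = (∑ i, μ i) - μ j := by
      rw [Finset.sum_erase_eq_sub (Finset.mem_univ j)]
    have h2ε₁ : 2 * ε ≤ (∑ i, μ i - lam) / 2 := by
      rw [hε]
      have := min_le_left (∑ i, μ i - lam) m
      linarith
    have h2ε₂ : 2 * ε ≤ m / 2 := by
      rw [hε]
      have := min_le_right (∑ i, μ i - lam) m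
      linarith
    rcases le_or_gt lam (μ j) with h | h
    · rw [max_eq_right (by linarith)]
      have : 0 < ∑ i ∈ Finset.univ.erase j, μ i := lt_of_lt_of_le hm_pos hSj
      nlinarith
    · rw [max_eq_left (by linarith)]
      rw [hsum]
      nlinarith
  -- continuity in γ
  have hcont : ∀ j : Fin n,
      Filter.Tendsto (fun γ : ℝ => (max (lam - μ j) 0) ^ ((1 : ℝ) + γ)
          - ∑ i ∈ Finset.univ.erase j, μ i) (nhds 0)
        (nhds ((max (lam - μ j) 0) - ∑ i ∈ Finset.univ.erase j, μ i)) := by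
    intro j
    have h1 : Filter.Tendsto (fun γ : ℝ => (1 : ℝ) + γ) (nhds 0) (nhds 1) := by
      have := ((continuous_const.add continuous_id).tendsto (0 : ℝ) : Filter.Tendsto (fun γ : ℝ => (1:ℝ) + γ) (nhds 0) (nhds ((1:ℝ) + 0)))
      simpa [Pi.add_def] using this
    have h2 : ContinuousAt (fun y : ℝ => (max (lam - μ j) 0) ^ y) 1 :=
      Real.continuousAt_const_rpow' one_ne_zero
    have h3 : Filter.Tendsto (fun γ : ℝ => (max (lam - μ j) 0) ^ ((1 : ℝ) + γ)) (nhds 0)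
        (nhds ((max (lam - μ j) 0) ^ (1 : ℝ))) := h2.tendsto.comp h1
    rw [Real.rpow_one] at h3
    exact h3.sub tendsto_const_nhds
  have hforall : ∀ᶠ γ in nhds (0 : ℝ), ∀ j : Fin n,
      (max (lam - μ j) 0) ^ ((1 : ℝ) + γ) - ∑ i ∈ Finset.univ.erase j, μ i < -2 * ε :=
    Filter.eventually_all.mpr fun j => (hcont j).eventually_lt_const (key j)
  have hle1 : ∀ᶠ γ in nhds (0 : ℝ), γ ≤ 1 :=
    Filter.Eventually.mono (eventually_lt_nhds (by norm_num : (0:ℝ) < 1)) fun x hx => hx.le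
  have hcomb : ∀ᶠ γ in nhdsWithin (0 : ℝ) (Set.Ioi 0),
      (0 < γ ∧ γ ≤ 1 ∧ ∀ j : Fin n,
        (max (lam - μ j) 0) ^ ((1 : ℝ) + γ) - ∑ i ∈ Finset.univ.erase j, μ i < -2 * ε) := by
    filter_upwards [self_mem_nhdsWithin,
      (hle1.and hforall).filter_mono nhdsWithin_le_nhds] with γ h1 h2
    exact ⟨h1, h2.1, h2.2⟩
  obtain ⟨γ, hγ⟩ := hcomb.exists
  exact ⟨γ, hγ⟩
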